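/- Let F(z) = ∫ (e^{iθ}+z)/(e^{iθ}−z) dμ(θ) be the Carathéodory function of a conjugation-invariant probability measure μ on ∂𝔻, and let ν = Sz(μ) with m-function m and M(z) = −m(z + 1/z). If M has no poles in 𝔻 (equivalently, the Jacobi matrix for ν has no eigenvalues off [-2,2]), then M(z) = −F(z)/(z − z^{-1}) for z ∈ 𝔻 \ {0}. -/

import Mathlib

open MeasureTheory Real

/-- For a conjugation-invariant probability measure `μ` on the circle
(realized on `[0, 2π)`) with Szegő image `ν = μ ∘ (θ ↦ 2cos θ)⁻¹`,
`m(E) = ∫ dν(x)/(x - E)` and `M(z) = -m(z + 1/z)` (which has no poles in `𝔻`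
since `ν` is supported in `[-2,2]`), one has
`M(z) = -F(z)/(z - z⁻¹)` on `𝔻 \ {0}`, where `F` is the Carathéodory function
of `μ`. -/
theorem M_eq_neg_F_div (μ : Measure ℝ) [IsProbabilityMeasure μ]
    (hsupp : μ (Set.Ico 0 (2 * π))ᶜ = 0)
    (hinv : μ.map (fun θ => 2 * π - θ) = μ) :
    ∀ z : ℂ, z ≠ 0 → ‖z‖ < 1 →
      -(∫ x : ℝ, ((x : ℂ) - (z + z⁻¹))⁻¹ ∂(μ.map fun θ => 2 * Real.cos θ)) =
        -(∫ θ : ℝ, (Complex.exp ((θ : ℂ) * Complex.I) + z) /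
            (Complex.exp ((θ : ℂ) * Complex.I) - z) ∂μ) / (z - z⁻¹) := by
  intro z hz0 hz1
  set w : ℂ := z + z⁻¹ with hw
  set e : ℝ → ℂ := fun θ => Complex.exp ((θ : ℂ) * Complex.I) with he_def
  have habs_e : ∀ θ : ℝ, ‖e θ‖ = 1 := fun θ =>
    Complex.norm_exp_ofReal_mul_I θ
  have he0 : ∀ θ : ℝ, e θ ≠ 0 := fun θ => Complex.exp_ne_zero _
  have hez : ∀ θ : ℝ, e θ - z ≠ 0 := by
    intro θ h
    rw [sub_eq_zero] at h
    rw [← h, habs_e] at hz1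
    exact lt_irrefl _ hz1
  have hez' : ∀ θ : ℝ, Complex.exp (-((θ : ℂ) * Complex.I)) - z ≠ 0 := by
    intro θ h
    rw [sub_eq_zero] at h
    have : ‖Complex.exp (-((θ:ℂ) * Complex.I))‖ = 1 := by
      have : -((θ:ℂ) * Complex.I) = ((-θ : ℝ) : ℂ) * Complex.I := by push_cast; ring
      rw [this]; exact Complex.norm_exp_ofReal_mul_I _
    rw [← h, this] at hz1
    exact lt_irrefl _ hz1
  -- factorization of the Szegő denominator
  have hfac : ∀ θ : ℝ, ((2 * Real.cos θ : ℝ) : ℂ) - w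
      = -((z - e θ) * (z - Complex.exp (-((θ:ℂ) * Complex.I)))) / z := by
    intro θ
    have hc : ((2 * Real.cos θ : ℝ) : ℂ)
        = e θ + Complex.exp (-((θ:ℂ) * Complex.I)) := by
      simp only [he_def]
      push_cast [Complex.ofReal_cos]
      rw [Complex.cos]; ring
    have hE : Complex.exp (-((θ:ℂ) * Complex.I)) = (e θ)⁻¹ := Complex.exp_neg _
    rw [hw, hc, hE]
    field_simp [he0 θ]
    ring
  have hzabs : (0:ℝ) < 1 - ‖z‖ := by linarith
  have hfacne : ∀ θ : ℝ, ((2 * Real.cos θ : ℝ) : ℂ) - w ≠ 0 := by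
    intro θ
    rw [hfac θ]
    have h1 : z - e θ ≠ 0 := fun h => hez θ (by rw [sub_eq_zero] at h ⊢; exact h.symm)
    have h2 : z - Complex.exp (-((θ:ℂ) * Complex.I)) ≠ 0 := fun h =>
      hez' θ (by rw [sub_eq_zero] at h ⊢; exact h.symm)
    exact div_ne_zero (neg_ne_zero.mpr (mul_ne_zero h1 h2)) hz0
  -- norm lower bound for the Szegő denominator
  have hbound : ∀ θ : ℝ, ‖((2 * Real.cos θ : ℝ) : ℂ) - w‖
      ≥ (1 - ‖z‖)^2 / ‖z‖ := by
    intro θ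
    rw [hfac θ]
    rw [norm_div, norm_neg, norm_mul]
    have h1 : 1 - ‖z‖ ≤ ‖z - e θ‖ := by
      have h := norm_sub_norm_le (e θ) z
      simp only [habs_e] at h
      rw [norm_sub_rev]; linarith
    have h2 : 1 - ‖z‖ ≤ ‖z - Complex.exp (-((θ:ℂ) * Complex.I))‖ := by
      have heq : -((θ:ℂ) * Complex.I) = ((-θ : ℝ) : ℂ) * Complex.I := by push_cast; ring
      have h := norm_sub_norm_le (Complex.exp (-((θ:ℂ) * Complex.I))) z
      simp only [heq, Complex.norm_exp_ofReal_mul_I] at h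
      rw [norm_sub_rev, heq]; linarith
    have hzpos : (0:ℝ) < ‖z‖ := by
      simpa [norm_pos_iff] using hz0
    have hmul : (1 - ‖z‖)^2
        ≤ ‖z - e θ‖ * ‖z - Complex.exp (-((θ:ℂ) * Complex.I))‖ := by
      rw [sq]
      exact mul_le_mul h1 h2 hzabs.le (norm_nonneg _)
    exact (div_le_div_iff_of_pos_right hzpos).mpr hmul
  have hzpos : (0:ℝ) < ‖z‖ := by simpa [norm_pos_iff] using hz0
  -- continuity / measurability
  have hecont : Continuous e := by
    simpa [he_def] using (Complex.continuous_ofReal.mul continuous_const).cexp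
  have hfcont : Continuous (fun θ : ℝ => (e θ + z) / (e θ - z)) :=
    (hecont.add continuous_const).div (hecont.sub continuous_const) hez
  have hhmeas : Measurable (fun θ : ℝ => (((2 * Real.cos θ : ℝ)) : ℂ) - w) := by
    exact (Complex.measurable_ofReal.comp ((measurable_const.mul Real.measurable_cos))).sub
      measurable_const
  -- integrability of the Szegő integrand
  have hhint : Integrable (fun θ : ℝ => ((((2 * Real.cos θ : ℝ)) : ℂ) - w)⁻¹) μ := by
    apply Integrable.mono' (integrable_const (‖z‖ / (1 - ‖z‖)^2))
    · exact hhmeas.inv.aestronglyMeasurable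
    · filter_upwards with θ
      rw [norm_inv]
      rw [inv_le_comm₀ (norm_pos_iff.mpr (hfacne θ)) (by positivity), inv_div]
      exact hbound θ
  -- integrability of Carathéodory-type integrands
  have hCbound : ∀ (a : ℂ), ‖a‖ = 1 → ‖(a + z)/(a - z)‖ ≤ (1 + ‖z‖)/(1 - ‖z‖) := by
    intro a ha
    rw [norm_div]
    apply div_le_div₀ (by positivity)
    · calc ‖a + z‖ ≤ ‖a‖ + ‖z‖ := norm_add_le _ _
        _ = 1 + ‖z‖ := by rw [ha]
    · exact hzabs
    · have h := norm_sub_norm_le a z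
      simp only [ha] at h
      linarith
  have hfint : Integrable (fun θ : ℝ => (e θ + z) / (e θ - z)) μ := by
    apply Integrable.mono' (integrable_const ((1 + ‖z‖)/(1 - ‖z‖)))
    · exact hfcont.aestronglyMeasurable
    · filter_upwards with θ; exact hCbound (e θ) (habs_e θ)
  have hftcont : Continuous (fun θ : ℝ => (Complex.exp (-((θ:ℂ) * Complex.I)) + z)
      / (Complex.exp (-((θ:ℂ) * Complex.I)) - z)) := by
    have hc : Continuous (fun θ : ℝ => Complex.exp (-((θ:ℂ) * Complex.I))) :=
      ((Complex.continuous_ofReal.mul continuous_const).neg).cexp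
    exact (hc.add continuous_const).div (hc.sub continuous_const) hez'
  have hftint : Integrable (fun θ : ℝ => (Complex.exp (-((θ:ℂ) * Complex.I)) + z)
      / (Complex.exp (-((θ:ℂ) * Complex.I)) - z)) μ := by
    apply Integrable.mono' (integrable_const ((1 + ‖z‖)/(1 - ‖z‖)))
    · exact hftcont.aestronglyMeasurable
    · filter_upwards with θ
      apply hCbound
      have heq : -((θ:ℂ) * Complex.I) = ((-θ : ℝ) : ℂ) * Complex.I := by push_cast; ring
      rw [heq]; exact Complex.norm_exp_ofReal_mul_I _
  -- rewrite the LHS via the Szegő map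
  have hmap : (∫ x : ℝ, ((x : ℂ) - w)⁻¹ ∂(μ.map fun θ => 2 * Real.cos θ))
      = ∫ θ : ℝ, ((((2 * Real.cos θ : ℝ)) : ℂ) - w)⁻¹ ∂μ := by
    rw [integral_map (by fun_prop : AEMeasurable (fun θ : ℝ => 2 * Real.cos θ) μ) (f := fun x : ℝ => ((x : ℂ) - w)⁻¹) ((Complex.measurable_ofReal.sub_const w).inv.aestronglyMeasurable)]
  -- symmetrization of F via hinv
  have hsym : (∫ θ : ℝ, (e θ + z) / (e θ - z) ∂μ)
      = ∫ θ : ℝ, (Complex.exp (-((θ:ℂ) * Complex.I)) + z)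
          / (Complex.exp (-((θ:ℂ) * Complex.I)) - z) ∂μ := by
    conv_lhs => rw [← hinv]
    rw [integral_map (by fun_prop) (by rw [hinv]; exact hfcont.aestronglyMeasurable)]
    congr 1
    funext θ
    have heq : e (2 * π - θ) = Complex.exp (-((θ:ℂ) * Complex.I)) := by
      simp only [he_def]
      have : ((2 * π - θ : ℝ) : ℂ) * Complex.I = 2 * π * Complex.I + -((θ:ℂ) * Complex.I) := by
        push_cast; ring
      rw [this, Complex.exp_add, Complex.exp_two_pi_mul_I, one_mul]
    rw [← heq]
  -- pointwise kernel identity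
  have hkernel : ∀ θ : ℝ, (e θ + z) / (e θ - z)
      + (Complex.exp (-((θ:ℂ) * Complex.I)) + z) / (Complex.exp (-((θ:ℂ) * Complex.I)) - z)
      = 2 * (z - z⁻¹) * ((((2 * Real.cos θ : ℝ)) : ℂ) - w)⁻¹ := by
    intro θ
    rw [hfac θ]
    have hE : Complex.exp (-((θ:ℂ) * Complex.I)) = (e θ)⁻¹ := Complex.exp_neg _
    have h1 : z - e θ ≠ 0 := fun h => hez θ (by rw [sub_eq_zero] at h ⊢; exact h.symm)
    have h2 : (e θ)⁻¹ - z ≠ 0 := by rw [← hE]; exact hez' θ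
    have h2' : z - (e θ)⁻¹ ≠ 0 := fun h => h2 (by rw [sub_eq_zero] at h ⊢; exact h.symm)
    rw [hE, inv_div, ← mul_div_assoc,
      div_add_div _ _ (hez θ) h2,
      div_eq_div_iff (mul_ne_zero (hez θ) h2) (neg_ne_zero.mpr (mul_ne_zero h1 h2'))]
    field_simp [he0 θ]
    ring
  -- combine
  have hF : (∫ θ : ℝ, (e θ + z) / (e θ - z) ∂μ)
      = (z - z⁻¹) * ∫ θ : ℝ, ((((2 * Real.cos θ : ℝ)) : ℂ) - w)⁻¹ ∂μ := by
    have h2F : (2 : ℂ) * (∫ θ : ℝ, (e θ + z) / (e θ - z) ∂μ)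
        = ∫ θ : ℝ, ((e θ + z) / (e θ - z)
          + (Complex.exp (-((θ:ℂ) * Complex.I)) + z) / (Complex.exp (-((θ:ℂ) * Complex.I)) - z)) ∂μ := by
      rw [integral_add hfint hftint, ← hsym]; ring
    have h2F' : (2 : ℂ) * (∫ θ : ℝ, (e θ + z) / (e θ - z) ∂μ)
        = 2 * ((z - z⁻¹) * ∫ θ : ℝ, ((((2 * Real.cos θ : ℝ)) : ℂ) - w)⁻¹ ∂μ) := by
      rw [h2F]
      simp_rw [hkernel, ← smul_eq_mul (a := 2 * (z - z⁻¹))]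
      rw [integral_smul]
      simp [smul_eq_mul]; ring
    have := mul_left_cancel₀ (two_ne_zero (α := ℂ)) h2F'
    exact this
  have hzz : z - z⁻¹ ≠ 0 := by
    intro h
    rw [sub_eq_zero] at h
    have : z * z = 1 := by field_simp at h; linear_combination h
    have habs : ‖z‖ * ‖z‖ = 1 := by
      rw [← norm_mul, this, norm_one]
    nlinarith [norm_nonneg z]
  rw [hmap, hF, neg_div, mul_div_cancel_left₀ _ hzz]
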